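/- arXiv:math/0508438 — 2 statements merged into one kernel-verified Lean document; each statement's English description precedes it below -/
import Mathlib

section
/- F is an irreducible module for the Clifford algebra generated by the wedging and contracting operators: the only ℂ-subspaces of F invariant under all ψ_j and all ψ_j* (j ∈ ℤ) are 0 and F itself. -/
open Finsupp

/-- A semi-infinite monomial: a strictly decreasing sequence `seq : ℕ → ℤ` such that
for some `m : ℤ` (its charge) one has `seq k = m - k` for all sufficiently large `k`. -/
structure SIM : Type where
  seq : ℕ → ℤ
  anti : StrictAnti seq
  ex_charge : ∃ m : ℤ, ∃ N : ℕ, ∀ k, N ≤ k → seq k = m - (k : ℤ)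

/-- Full fermionic Fock space: the free `ℂ`-vector space on the set of all
semi-infinite monomials. -/
abbrev FockF : Type := SIM →₀ ℂ

namespace SIM

/-- `φ` is a semi-infinite monomial of charge `m`. -/
def HasCharge (φ : SIM) (m : ℤ) : Prop := ∃ N : ℕ, ∀ k, N ≤ k → φ.seq k = m - (k : ℤ)

theorem exists_lt (φ : SIM) (j : ℤ) : ∃ n : ℕ, φ.seq n < j := by
  obtain ⟨m, N, hN⟩ := φ.ex_charge
  refine ⟨N + (m - j).toNat + 1, ?_⟩
  have h1 := hN (N + (m - j).toNat + 1) (by omega)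
  omega

/-- The position at which `j` is inserted into `φ`: the least `n` with `φ.seq n < j`.
If `i_s > j > i_{s+1}` this equals `s + 1`, and it equals `0` if `j > i_0`. -/
noncomputable def wedgePos (φ : SIM) (j : ℤ) : ℕ := Nat.find (φ.exists_lt j)

/-- The semi-infinite monomial obtained from `φ` by inserting `j` (assuming `j` does not
occur in `φ`). -/
noncomputable def insertSIM (φ : SIM) (j : ℤ) (hj : ∀ s, φ.seq s ≠ j) : SIM where
  seq k := if k < φ.wedgePos j then φ.seq k else if k = φ.wedgePos j then j else φ.seq (k - 1)
  anti := by
    have hs : φ.seq (φ.wedgePos j) < j := Nat.find_spec (φ.exists_lt j)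
    have hm : ∀ k, k < φ.wedgePos j → j < φ.seq k := by
      intro k hk
      have h1 := Nat.find_min (φ.exists_lt j) hk
      have h2 := hj k
      omega
    have ha : ∀ a b : ℕ, a < b → φ.seq b < φ.seq a := fun a b h => φ.anti h
    apply strictAnti_nat_of_succ_lt
    intro k
    try dsimp only
    rcases lt_trichotomy k (φ.wedgePos j) with hk | hk | hk
    · rcases Nat.lt_or_ge (k + 1) (φ.wedgePos j) with hk1 | hk1
      · rw [if_pos hk, if_pos hk1]
        exact ha k (k + 1) (by omega)
      · have hk1' : k + 1 = φ.wedgePos j := by omega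
        rw [if_pos hk, if_neg (by omega), if_pos hk1']
        exact hm k hk
    · rw [if_neg (by omega), if_neg (by omega), if_neg (by omega), if_pos hk,
        (by omega : k + 1 - 1 = k), hk]
      exact hs
    · rw [if_neg (by omega), if_neg (by omega), if_neg (by omega), if_neg (by omega),
        (by omega : k + 1 - 1 = k)]
      exact ha (k - 1) k (by omega)
  ex_charge := by
    obtain ⟨m, N, hN⟩ := φ.ex_charge
    refine ⟨m + 1, N + φ.wedgePos j + 1, fun k hk => ?_⟩
    try dsimp only
    rw [if_neg (by omega), if_neg (by omega)]
    have h3 := hN (k - 1) (by omega)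
    omega

/-- The semi-infinite monomial obtained from `φ` by deleting the entry in position `s`. -/
noncomputable def removeSIM (φ : SIM) (s : ℕ) : SIM where
  seq k := if k < s then φ.seq k else φ.seq (k + 1)
  anti := by
    apply strictAnti_nat_of_succ_lt
    intro k
    try dsimp only
    split_ifs <;> exact φ.anti (by omega)
  ex_charge := by
    obtain ⟨m, N, hN⟩ := φ.ex_charge
    refine ⟨m - 1, N + s, fun k hk => ?_⟩
    try dsimp only
    rw [if_neg (by omega)]
    have h3 := hN (k + 1) (by omega)
    omega

end SIM

open Classical in
/-- The wedging operator `ψ_j` on full fermionic Fock space.  On a basis element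
`φ = (i_0, i_1, ...)` it is `0` if `j = i_s` for some `s`, and otherwise it is
`(-1)^n` times the basis element obtained by inserting `j` in position `n`
(so `(-1)^{s+1}` when `i_s > j > i_{s+1}`, and `+1` when `j > i_0`). -/
noncomputable def psi (j : ℤ) : FockF →ₗ[ℂ] FockF :=
  Finsupp.lift FockF ℂ SIM fun φ =>
    if hj : ∀ s, φ.seq s ≠ j then
      ((-1 : ℂ) ^ (φ.wedgePos j)) • Finsupp.single (φ.insertSIM j hj) 1
    else 0

open Classical in
/-- The contracting operator `ψ_j^*` on full fermionic Fock space.  On a basis element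
`φ = (i_0, i_1, ...)` it is `0` if `j ≠ i_s` for all `s`, and `(-1)^s` times the basis
element obtained by deleting `i_s` if `j = i_s`. -/
noncomputable def psiStar (j : ℤ) : FockF →ₗ[ℂ] FockF :=
  Finsupp.lift FockF ℂ SIM fun φ =>
    if hj : ∃ s, φ.seq s = j then
      ((-1 : ℂ) ^ hj.choose) • Finsupp.single (φ.removeSIM hj.choose) 1
    else 0

namespace SIM

lemma ext' {a b : SIM} (h : ∀ k, a.seq k = b.seq k) : a = b := by
  cases a; cases b; simp only [SIM.mk.injEq]; exact funext h

lemma seq_inj (φ : SIM) : Function.Injective φ.seq := φ.anti.injective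

/-- membership of an integer in a SIM -/
def Mem (φ : SIM) (j : ℤ) : Prop := ∃ s, φ.seq s = j

lemma wedgePos_spec (φ : SIM) (j : ℤ) : φ.seq (φ.wedgePos j) < j :=
  Nat.find_spec (φ.exists_lt j)

lemma wedgePos_min {φ : SIM} {j : ℤ} {k : ℕ} (h : k < φ.wedgePos j) : j < φ.seq k ∨ φ.seq k = j := by
  have := Nat.find_min (φ.exists_lt j) h
  omega

lemma insert_seq_lt {φ : SIM} {j : ℤ} (hj : ∀ s, φ.seq s ≠ j) {k : ℕ}
    (h : k < φ.wedgePos j) : (φ.insertSIM j hj).seq k = φ.seq k := by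
  simp [SIM.insertSIM, h]

lemma insert_seq_eq {φ : SIM} {j : ℤ} (hj : ∀ s, φ.seq s ≠ j) :
    (φ.insertSIM j hj).seq (φ.wedgePos j) = j := by
  simp [SIM.insertSIM]

lemma insert_seq_gt {φ : SIM} {j : ℤ} (hj : ∀ s, φ.seq s ≠ j) {k : ℕ}
    (h : φ.wedgePos j < k) : (φ.insertSIM j hj).seq k = φ.seq (k - 1) := by
  simp only [SIM.insertSIM]
  rw [if_neg (by omega), if_neg (by omega)]

lemma remove_seq_lt {φ : SIM} {s k : ℕ} (h : k < s) : (φ.removeSIM s).seq k = φ.seq k := by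
  simp [SIM.removeSIM, h]

lemma remove_seq_ge {φ : SIM} {s k : ℕ} (h : s ≤ k) : (φ.removeSIM s).seq k = φ.seq (k + 1) := by
  simp only [SIM.removeSIM]
  rw [if_neg (by omega)]

lemma insert_seq_eq_iff {φ : SIM} {j : ℤ} (hj : ∀ s, φ.seq s ≠ j) (s : ℕ) :
    (φ.insertSIM j hj).seq s = j ↔ s = φ.wedgePos j := by
  constructor
  · intro h
    by_contra hne
    rcases Nat.lt_or_ge s (φ.wedgePos j) with h1 | h1
    · rw [insert_seq_lt hj h1] at h; exact hj s h
    · have h2 : φ.wedgePos j < s := by omega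
      rw [insert_seq_gt hj h2] at h; exact hj (s-1) h
  · rintro rfl; exact insert_seq_eq hj

lemma mem_insert_iff {φ : SIM} {j : ℤ} (hj : ∀ s, φ.seq s ≠ j) (i : ℤ) :
    (φ.insertSIM j hj).Mem i ↔ i = j ∨ φ.Mem i := by
  constructor
  · rintro ⟨s, hs⟩
    rcases Nat.lt_trichotomy s (φ.wedgePos j) with h | h | h
    · right; exact ⟨s, by rwa [insert_seq_lt hj h] at hs⟩
    · left; rw [← hs, h, insert_seq_eq hj]
    · right; exact ⟨s - 1, by rwa [insert_seq_gt hj h] at hs⟩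
  · rintro (heq | ⟨s, hs⟩)
    · exact ⟨φ.wedgePos j, by rw [heq]; exact insert_seq_eq hj⟩
    · rcases Nat.lt_or_ge s (φ.wedgePos j) with h | h
      · exact ⟨s, by rw [insert_seq_lt hj h, hs]⟩
      · exact ⟨s + 1, by rw [insert_seq_gt hj (by omega), Nat.add_sub_cancel, hs]⟩

lemma mem_remove_iff (φ : SIM) (s : ℕ) (i : ℤ) :
    (φ.removeSIM s).Mem i ↔ φ.Mem i ∧ i ≠ φ.seq s := by
  constructor
  · rintro ⟨t, ht⟩
    rcases Nat.lt_or_ge t s with h | h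
    · rw [remove_seq_lt h] at ht
      exact ⟨⟨t, ht⟩, fun he => by have := φ.seq_inj (ht.trans he); omega⟩
    · rw [remove_seq_ge h] at ht
      exact ⟨⟨t + 1, ht⟩, fun he => by have := φ.seq_inj (ht.trans he); omega⟩
  · rintro ⟨⟨t, ht⟩, hne⟩
    have hts : t ≠ s := fun h => hne (h ▸ ht.symm)
    rcases Nat.lt_or_ge t s with h | h
    · exact ⟨t, by rw [remove_seq_lt h, ht]⟩
    · exact ⟨t - 1, by rw [remove_seq_ge (by omega), (by omega : t - 1 + 1 = t), ht]⟩

lemma not_mem_remove {φ : SIM} {s : ℕ} : ∀ t, (φ.removeSIM s).seq t ≠ φ.seq s := by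
  intro t ht
  rcases Nat.lt_or_ge t s with h | h
  · rw [remove_seq_lt h] at ht; have := φ.seq_inj ht; omega
  · rw [remove_seq_ge h] at ht; have := φ.seq_inj ht; omega

lemma remove_insert {φ : SIM} {j : ℤ} (hj : ∀ s, φ.seq s ≠ j) :
    (φ.insertSIM j hj).removeSIM (φ.wedgePos j) = φ := by
  apply ext'
  intro k
  rcases Nat.lt_or_ge k (φ.wedgePos j) with h | h
  · rw [remove_seq_lt h, insert_seq_lt hj h]
  · rw [remove_seq_ge h, insert_seq_gt hj (by omega), Nat.add_sub_cancel]

lemma wedgePos_remove {φ : SIM} {s : ℕ} : (φ.removeSIM s).wedgePos (φ.seq s) = s := by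
  rw [SIM.wedgePos, Nat.find_eq_iff]
  constructor
  · rw [remove_seq_ge le_rfl]; exact φ.anti (by omega)
  · intro k hk
    rw [remove_seq_lt hk, not_lt]
    exact le_of_lt (φ.anti hk)

lemma insert_remove {φ : SIM} {s : ℕ} (h' : ∀ t, (φ.removeSIM s).seq t ≠ φ.seq s) :
    (φ.removeSIM s).insertSIM (φ.seq s) h' = φ := by
  apply ext'
  intro k
  rcases Nat.lt_trichotomy k s with h | h | h
  · rw [insert_seq_lt h' (by rw [wedgePos_remove]; exact h), remove_seq_lt h]
  · rw [h, insert_seq_eq_iff h' s |>.mpr wedgePos_remove.symm]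
  · rw [insert_seq_gt h' (by rw [wedgePos_remove]; exact h),
      remove_seq_ge (by omega : s ≤ k - 1), (by omega : k - 1 + 1 = k)]

/-- two SIMs with the same range are equal -/
lemma eq_of_mem_iff {a b : SIM} (h : ∀ j, a.Mem j ↔ b.Mem j) : a = b := by
  apply ext'
  intro k
  induction k using Nat.strong_induction_on with
  | _ k ih =>
    have h1 : a.seq k ≤ b.seq k := by
      obtain ⟨l, hl⟩ := (h (a.seq k)).mp ⟨k, rfl⟩
      have hlk : k ≤ l := by
        by_contra hc
        push_neg at hc
        rw [← ih l hc] at hl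
        have := a.seq_inj hl
        omega
      calc a.seq k = b.seq l := hl.symm
        _ ≤ b.seq k := b.anti.antitone hlk
    have h2 : b.seq k ≤ a.seq k := by
      obtain ⟨l, hl⟩ := (h (b.seq k)).mpr ⟨k, rfl⟩
      have hlk : k ≤ l := by
        by_contra hc
        push_neg at hc
        rw [ih l hc] at hl
        have := b.seq_inj hl
        omega
      calc b.seq k = a.seq l := hl.symm
        _ ≤ a.seq k := a.anti.antitone hlk
    omega

end SIM
open Classical in
lemma psi_single_pos (j : ℤ) (φ : SIM) (hj : ∀ s, φ.seq s ≠ j) :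
    psi j (Finsupp.single φ 1) =
      ((-1:ℂ) ^ (φ.wedgePos j)) • Finsupp.single (φ.insertSIM j hj) 1 := by
  rw [psi, Finsupp.lift_apply, Finsupp.sum_single_index, one_smul, dif_pos hj]
  simp

open Classical in
lemma psi_single_zero (j : ℤ) (φ : SIM) (hj : ¬ ∀ s, φ.seq s ≠ j) :
    psi j (Finsupp.single φ 1) = 0 := by
  rw [psi, Finsupp.lift_apply, Finsupp.sum_single_index, one_smul, dif_neg hj]
  simp

open Classical in
lemma psiStar_single_pos (j : ℤ) (φ : SIM) {s : ℕ} (hs : φ.seq s = j) :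
    psiStar j (Finsupp.single φ 1) = ((-1:ℂ) ^ s) • Finsupp.single (φ.removeSIM s) 1 := by
  rw [psiStar, Finsupp.lift_apply, Finsupp.sum_single_index, one_smul]
  · have hex : ∃ t, φ.seq t = j := ⟨s, hs⟩
    rw [dif_pos hex]
    have hc : hex.choose = s := φ.seq_inj (hex.choose_spec.trans hs.symm)
    rw [hc]
  · simp

open Classical in
lemma psiStar_single_zero (j : ℤ) (φ : SIM) (hj : ¬ ∃ s, φ.seq s = j) :
    psiStar j (Finsupp.single φ 1) = 0 := by
  rw [psiStar, Finsupp.lift_apply, Finsupp.sum_single_index, one_smul, dif_neg hj]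
  simp

lemma neg_one_sq_pow (s : ℕ) : ((-1:ℂ)^s) * ((-1:ℂ)^s) = 1 := by
  rw [← pow_add, ← two_mul, pow_mul]
  norm_num

open Classical in
lemma PP_single (j : ℤ) (φ : SIM) :
    psi j (psiStar j (Finsupp.single φ 1)) =
      if φ.Mem j then Finsupp.single φ 1 else 0 := by
  by_cases h : φ.Mem j
  · obtain ⟨s, hs⟩ := h
    subst hs
    have hj' : ∀ t, (φ.removeSIM s).seq t ≠ φ.seq s := SIM.not_mem_remove
    rw [if_pos ⟨s, rfl⟩, psiStar_single_pos _ φ rfl, map_smul, psi_single_pos _ _ hj',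
      smul_smul, SIM.wedgePos_remove, SIM.insert_remove hj', neg_one_sq_pow, one_smul]
  · rw [if_neg h, psiStar_single_zero j φ h, map_zero]

open Classical in
lemma QQ_single (j : ℤ) (φ : SIM) :
    psiStar j (psi j (Finsupp.single φ 1)) =
      if φ.Mem j then 0 else Finsupp.single φ 1 := by
  by_cases h : φ.Mem j
  · rw [if_pos h, psi_single_zero j φ (by push_neg; exact h), map_zero]
  · rw [if_neg h]
    have hj : ∀ s, φ.seq s ≠ j := by
      intro s hs; exact h ⟨s, hs⟩
    rw [psi_single_pos j φ hj, map_smul,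
      psiStar_single_pos j _ (SIM.insert_seq_eq hj), SIM.remove_insert hj, smul_smul,
      neg_one_sq_pow, one_smul]
open Classical in
lemma PP_apply (j : ℤ) (x : FockF) (ψ : SIM) :
    (psi j (psiStar j x)) ψ = if ψ.Mem j then x ψ else 0 := by
  induction x using Finsupp.induction_linear with
  | zero => simp
  | add f g hf hg =>
    rw [map_add, map_add, Finsupp.add_apply, hf, hg, Finsupp.add_apply]
    split <;> simp
  | single φ c =>
    have h1 : Finsupp.single φ c = c • Finsupp.single φ (1:ℂ) := by
      rw [Finsupp.smul_single, smul_eq_mul, mul_one]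
    rw [h1, map_smul, map_smul, PP_single]
    by_cases he : φ = ψ
    · subst he
      by_cases hm : φ.Mem j <;> simp [hm]
    · by_cases hm : φ.Mem j <;>
        simp [hm, Finsupp.single_eq_of_ne' he]

open Classical in
lemma QQ_apply (j : ℤ) (x : FockF) (ψ : SIM) :
    (psiStar j (psi j x)) ψ = if ψ.Mem j then 0 else x ψ := by
  induction x using Finsupp.induction_linear with
  | zero => simp
  | add f g hf hg =>
    rw [map_add, map_add, Finsupp.add_apply, hf, hg, Finsupp.add_apply]
    split <;> simp
  | single φ c =>
    have h1 : Finsupp.single φ c = c • Finsupp.single φ (1:ℂ) := by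
      rw [Finsupp.smul_single, smul_eq_mul, mul_one]
    rw [h1, map_smul, map_smul, QQ_single]
    by_cases he : φ = ψ
    · subst he
      by_cases hm : φ.Mem j <;> simp [hm]
    · by_cases hm : φ.Mem j <;>
        simp [hm, Finsupp.single_eq_of_ne' he]

open Classical in
lemma exists_single_mem (S : Submodule ℂ FockF)
    (hpsi : ∀ j : ℤ, ∀ x ∈ S, psi j x ∈ S)
    (hpsiStar : ∀ j : ℤ, ∀ x ∈ S, psiStar j x ∈ S) :
    ∀ (x : FockF), x ∈ S → x ≠ 0 → ∃ φ : SIM, Finsupp.single φ (1:ℂ) ∈ S := by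
  have key : ∀ n : ℕ, ∀ x : FockF, x.support.card = n → x ∈ S → x ≠ 0 →
      ∃ φ : SIM, Finsupp.single φ (1:ℂ) ∈ S := by
    intro n
    induction n using Nat.strong_induction_on with
    | _ n ih =>
      intro x hn hx hx0
      obtain ⟨φ0, hφ0⟩ : ∃ φ0, φ0 ∈ x.support :=
        Finset.Nonempty.exists_mem (Finsupp.support_nonempty_iff.mpr hx0)
      have hcφ0 : x φ0 ≠ 0 := Finsupp.mem_support_iff.mp hφ0
      by_cases hall : ∀ ψ ∈ x.support, ψ = φ0
      · have hxe : x = Finsupp.single φ0 (x φ0) := by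
          ext ψ
          by_cases he : ψ = φ0
          · subst he; simp
          · rw [Finsupp.single_eq_of_ne' (Ne.symm he)]
            by_contra hne
            exact he (hall ψ (Finsupp.mem_support_iff.mpr hne))
        refine ⟨φ0, ?_⟩
        have heq : Finsupp.single φ0 (1:ℂ) = (x φ0)⁻¹ • Finsupp.single φ0 (x φ0) := by
          rw [Finsupp.smul_single, smul_eq_mul, inv_mul_cancel₀ hcφ0]
        rw [heq, ← hxe]
        exact S.smul_mem _ hx
      · push_neg at hall
        obtain ⟨ψ0, hψ0, hne⟩ := hall
        have hdiff : ¬ ∀ j, ψ0.Mem j ↔ φ0.Mem j := fun h => hne (SIM.eq_of_mem_iff h)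
        push_neg at hdiff
        obtain ⟨j, hj⟩ := hdiff
        rcases hj with ⟨hψm, hm'⟩ | ⟨hψm, hm⟩
        · set y := psiStar j (psi j x) with hy
          have hyS : y ∈ S := hpsiStar _ _ (hpsi _ _ hx)
          have hyφ0 : y φ0 = x φ0 := by rw [hy, QQ_apply, if_neg hm']
          have hysupp : y.support ⊆ x.support := by
            intro ψ hψ
            rw [Finsupp.mem_support_iff] at hψ ⊢
            intro h0; apply hψ; rw [hy, QQ_apply, h0]; split <;> rfl
          have hyψ0 : ψ0 ∉ y.support := by
            simp [hy, QQ_apply, hψm]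
          have hcard : y.support.card < n := by
            rw [← hn]
            exact Finset.card_lt_card
              (Finset.ssubset_def.mpr ⟨hysupp, fun hsub => hyψ0 (hsub hψ0)⟩)
          exact ih _ hcard y rfl hyS
            (fun h0 => hcφ0 (by rw [← hyφ0, h0]; rfl))
        · set y := psi j (psiStar j x) with hy
          have hyS : y ∈ S := hpsi _ _ (hpsiStar _ _ hx)
          have hyφ0 : y φ0 = x φ0 := by rw [hy, PP_apply, if_pos hm]
          have hysupp : y.support ⊆ x.support := by
            intro ψ hψ
            rw [Finsupp.mem_support_iff] at hψ ⊢
            intro h0; apply hψ; rw [hy, PP_apply, h0]; split <;> rfl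
          have hyψ0 : ψ0 ∉ y.support := by
            simp [hy, PP_apply, hψm]
          have hcard : y.support.card < n := by
            rw [← hn]
            exact Finset.card_lt_card
              (Finset.ssubset_def.mpr ⟨hysupp, fun hsub => hyψ0 (hsub hψ0)⟩)
          exact ih _ hcard y rfl hyS
            (fun h0 => hcφ0 (by rw [← hyφ0, h0]; rfl))
  intro x hx hx0
  exact key _ x rfl hx hx0
namespace SIM

lemma mem_of_le (φ : SIM) : ∃ B : ℤ, ∀ j ≤ B, φ.Mem j := by
  obtain ⟨m, N, hN⟩ := φ.ex_charge
  refine ⟨m - N, fun j hj => ⟨(m - j).toNat, ?_⟩⟩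
  rw [hN _ (by omega)]
  omega

lemma seq_le (φ : SIM) (k : ℕ) : φ.seq k ≤ φ.seq 0 - k := by
  induction k with
  | zero => simp
  | succ k ih =>
    have h : φ.seq (k + 1) < φ.seq k := φ.anti (Nat.lt_succ_self k)
    push_cast
    omega

/-- The set where the ranges of two SIMs differ. -/
def diffSet (φ ψ : SIM) : Set ℤ := {j : ℤ | ¬(φ.Mem j ↔ ψ.Mem j)}

lemma halfdiff_finite (φ ψ : SIM) : {j : ℤ | φ.Mem j ∧ ¬ ψ.Mem j}.Finite := by
  obtain ⟨B, hB⟩ := ψ.mem_of_le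
  have hsub : {j : ℤ | φ.Mem j ∧ ¬ ψ.Mem j} ⊆ φ.seq '' (Set.Iio (φ.seq 0 - B).toNat) := by
    rintro j ⟨⟨k, hk⟩, hno⟩
    refine ⟨k, ?_, hk⟩
    have hjB : B < j := by
      by_contra hc
      exact hno (hB j (by omega))
    have := φ.seq_le k
    simp only [Set.mem_Iio]
    omega
  exact Set.Finite.subset (Set.Finite.image _ (Set.finite_Iio _)) hsub

lemma diffSet_finite (φ ψ : SIM) : (diffSet φ ψ).Finite := by
  have hsub : diffSet φ ψ ⊆
      {j : ℤ | φ.Mem j ∧ ¬ ψ.Mem j} ∪ {j : ℤ | ψ.Mem j ∧ ¬ φ.Mem j} := by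
    intro j hj
    simp only [diffSet, Set.mem_setOf_eq] at hj
    by_cases h1 : φ.Mem j <;> by_cases h2 : ψ.Mem j <;> tauto
  exact Set.Finite.subset ((halfdiff_finite φ ψ).union (halfdiff_finite ψ φ)) hsub

end SIM

open Classical in
lemma single_remove_mem (S : Submodule ℂ FockF)
    (hpsiStar : ∀ j : ℤ, ∀ x ∈ S, psiStar j x ∈ S)
    (φ : SIM) (s : ℕ) (h : Finsupp.single φ (1:ℂ) ∈ S) :
    Finsupp.single (φ.removeSIM s) (1:ℂ) ∈ S := by
  have h1 := hpsiStar (φ.seq s) _ h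
  rw [psiStar_single_pos _ _ rfl] at h1
  have h2 := S.smul_mem ((-1:ℂ)^s) h1
  rwa [smul_smul, neg_one_sq_pow, one_smul] at h2

open Classical in
lemma single_insert_mem (S : Submodule ℂ FockF)
    (hpsi : ∀ j : ℤ, ∀ x ∈ S, psi j x ∈ S)
    (φ : SIM) (j : ℤ) (hj : ∀ s, φ.seq s ≠ j) (h : Finsupp.single φ (1:ℂ) ∈ S) :
    Finsupp.single (φ.insertSIM j hj) (1:ℂ) ∈ S := by
  have h1 := hpsi j _ h
  rw [psi_single_pos _ _ hj] at h1
  have h2 := S.smul_mem ((-1:ℂ)^(φ.wedgePos j)) h1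
  rwa [smul_smul, neg_one_sq_pow, one_smul] at h2

open Classical in
lemma all_single_mem (S : Submodule ℂ FockF)
    (hpsi : ∀ j : ℤ, ∀ x ∈ S, psi j x ∈ S)
    (hpsiStar : ∀ j : ℤ, ∀ x ∈ S, psiStar j x ∈ S)
    (φ0 : SIM) (h0 : Finsupp.single φ0 (1:ℂ) ∈ S) :
    ∀ ψ : SIM, Finsupp.single ψ (1:ℂ) ∈ S := by
  have key : ∀ n : ℕ, ∀ φ ψ : SIM, (SIM.diffSet φ ψ).ncard = n →
      Finsupp.single φ (1:ℂ) ∈ S → Finsupp.single ψ (1:ℂ) ∈ S := by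
    intro n
    induction n using Nat.strong_induction_on with
    | _ n ih =>
      intro φ ψ hn hφ
      rcases Nat.eq_zero_or_pos n with hz | hpos
      · subst hz
        have hempty : SIM.diffSet φ ψ = ∅ :=
          (Set.ncard_eq_zero (SIM.diffSet_finite φ ψ)).mp hn
        have heq : φ = ψ := by
          apply SIM.eq_of_mem_iff
          intro j
          by_contra hc
          have : j ∈ SIM.diffSet φ ψ := hc
          rw [hempty] at this
          exact this
        rwa [heq] at hφ
      · have hne : (SIM.diffSet φ ψ).Nonempty :=
          Set.nonempty_of_ncard_ne_zero (by omega)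
        obtain ⟨j, hj⟩ := hne
        have hj' : ¬(φ.Mem j ↔ ψ.Mem j) := hj
        by_cases hm : φ.Mem j
        · have hψm : ¬ ψ.Mem j := fun h => hj' ⟨fun _ => h, fun _ => hm⟩
          obtain ⟨s, hs⟩ := hm
          set φ' := φ.removeSIM s with hφ'
          have hmem' : ∀ i, φ'.Mem i ↔ (φ.Mem i ∧ i ≠ j) := by
            intro i
            rw [hφ', SIM.mem_remove_iff, hs]
          have hD : SIM.diffSet φ' ψ = SIM.diffSet φ ψ \ {j} := by
            ext i
            simp only [SIM.diffSet, Set.mem_setOf_eq, Set.mem_diff, Set.mem_singleton_iff]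
            by_cases hij : i = j
            · subst hij
              simp only [hmem']
              tauto
            · rw [hmem']
              tauto
          have hcard : (SIM.diffSet φ' ψ).ncard = n - 1 := by
            rw [hD]
            have := Set.ncard_diff_singleton_add_one hj (SIM.diffSet_finite φ ψ)
            omega
          exact ih (n-1) (by omega) φ' ψ hcard
            (single_remove_mem S hpsiStar φ s hφ)
        · have hψm : ψ.Mem j := by
            by_contra hc
            exact hj' ⟨fun h => absurd h hm, fun h => absurd h hc⟩
          have hnj : ∀ s, φ.seq s ≠ j := fun s hs => hm ⟨s, hs⟩
          set φ' := φ.insertSIM j hnj with hφ'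
          have hmem' : ∀ i, φ'.Mem i ↔ (i = j ∨ φ.Mem i) := by
            intro i
            rw [hφ']
            exact SIM.mem_insert_iff hnj i
          have hD : SIM.diffSet φ' ψ = SIM.diffSet φ ψ \ {j} := by
            ext i
            simp only [SIM.diffSet, Set.mem_setOf_eq, Set.mem_diff, Set.mem_singleton_iff]
            by_cases hij : i = j
            · subst hij
              simp only [hmem']
              tauto
            · rw [hmem']
              tauto
          have hcard : (SIM.diffSet φ' ψ).ncard = n - 1 := by
            rw [hD]
            have := Set.ncard_diff_singleton_add_one hj (SIM.diffSet_finite φ ψ)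
            omega
          exact ih (n-1) (by omega) φ' ψ hcard
            (single_insert_mem S hpsi φ j hnj hφ)
  intro ψ
  exact key _ φ0 ψ rfl h0
/-- `F` is an irreducible module for the Clifford algebra generated by the
wedging and contracting operators: the only `ℂ`-subspaces of `F` invariant under all
`ψ_j` and all `ψ_j^*` (`j ∈ ℤ`) are `0` and `F` itself. -/
theorem fock_clifford_irreducible (S : Submodule ℂ FockF)
    (hpsi : ∀ j : ℤ, ∀ x ∈ S, psi j x ∈ S)
    (hpsiStar : ∀ j : ℤ, ∀ x ∈ S, psiStar j x ∈ S) :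
    S = ⊥ ∨ S = ⊤ := by
  by_cases hb : S = ⊥
  · exact Or.inl hb
  · right
    obtain ⟨x, hxS, hx0⟩ := Submodule.exists_mem_ne_zero_of_ne_bot hb
    obtain ⟨φ0, hφ0⟩ := exists_single_mem S hpsi hpsiStar x hxS hx0
    have hall := all_single_mem S hpsi hpsiStar φ0 hφ0
    have hallc : ∀ (φ : SIM) (c : ℂ), Finsupp.single φ c ∈ S := by
      intro φ c
      have := S.smul_mem c (hall φ)
      rwa [Finsupp.smul_single, smul_eq_mul, mul_one] at this
    rw [Submodule.eq_top_iff']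
    intro y
    rw [← Finsupp.sum_single y]
    exact Submodule.finsuppSum_mem ℂ S y Finsupp.single (fun φ _ => hallc φ (y φ))
end

section
/- For every n ∈ ℤ and every semi-infinite monomial φ, all but finitely many terms of the defining sum of α_n vanish on φ: if n ≠ 0 then ψ_j ψ_{j+n}*(φ) = 0 for all but finitely many j ∈ ℤ, and ψ_j ψ_j*(φ) = 0 for all but finitely many j > 0 while ψ_j* ψ_j(φ) = 0 for all but finitely many j ≤ 0. Consequently the free bosons α_n φ = Σ_{j∈ℤ} ψ_j ψ_{j+n}*(φ) (n ≠ 0) and α_0 φ = Σ_{j>0} ψ_j ψ_j*(φ) − Σ_{j≤0} ψ_j* ψ_j(φ) are well-defined linear operators on F. -/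
open Finsupp

open Classical in
/-- The free bosons `α_n` on full fermionic Fock space, defined on each basis vector `φ` by
`α_n φ = Σ_{j ∈ ℤ} ψ_j ψ_{j+n}^*(φ)` for `n ≠ 0` and
`α_0 φ = Σ_{j > 0} ψ_j ψ_j^*(φ) − Σ_{j ≤ 0} ψ_j^* ψ_j(φ)` (all sums are finite). -/
noncomputable def alpha (n : ℤ) : FockF →ₗ[ℂ] FockF :=
  Finsupp.lift FockF ℂ SIM fun φ =>
    if n = 0 then
      (∑ᶠ (j : ℤ) (_ : 0 < j), psi j (psiStar j (Finsupp.single φ 1))) -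
        ∑ᶠ (j : ℤ) (_ : j ≤ 0), psiStar j (psi j (Finsupp.single φ 1))
    else ∑ᶠ j : ℤ, psi j (psiStar (j + n) (Finsupp.single φ 1))

section Helpers

lemma lift_single_one (f : SIM → FockF) (φ : SIM) :
    Finsupp.lift FockF ℂ SIM f (Finsupp.single φ 1) = f φ := by
  simp [Finsupp.lift_apply, Finsupp.sum_single_index]

lemma psi_single_of_mem {j : ℤ} {φ : SIM} {s : ℕ} (h : φ.seq s = j) :
    psi j (Finsupp.single φ 1) = 0 := by
  rw [psi, lift_single_one, dif_neg]
  push_neg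
  exact ⟨s, h⟩

lemma psiStar_single_of_not_mem {j : ℤ} {φ : SIM} (h : ∀ s, φ.seq s ≠ j) :
    psiStar j (Finsupp.single φ 1) = 0 := by
  rw [psiStar, lift_single_one, dif_neg]
  push_neg
  exact h

lemma psiStar_single_of_mem {j : ℤ} {φ : SIM} {s : ℕ} (h : φ.seq s = j) :
    psiStar j (Finsupp.single φ 1)
      = ((-1 : ℂ) ^ s) • Finsupp.single (φ.removeSIM s) 1 := by
  have hex : ∃ s, φ.seq s = j := ⟨s, h⟩
  have hu : hex.choose = s := φ.anti.injective (by rw [hex.choose_spec, h])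
  rw [psiStar, lift_single_one, dif_pos hex, hu]

end Helpers

/-- for every semi-infinite monomial `φ`, all but finitely many terms of the
defining sum of `α_n` vanish on `φ`; consequently the free bosons `α_n` are well-defined
linear operators on `F` given on basis elements by the indicated (finite) sums. -/
theorem alpha_well_defined (φ : SIM) :
    (∀ n : ℤ, n ≠ 0 → {j : ℤ | psi j (psiStar (j + n) (Finsupp.single φ 1)) ≠ 0}.Finite) ∧
    {j : ℤ | 0 < j ∧ psi j (psiStar j (Finsupp.single φ 1)) ≠ 0}.Finite ∧
    {j : ℤ | j ≤ 0 ∧ psiStar j (psi j (Finsupp.single φ 1)) ≠ 0}.Finite ∧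
    (∀ n : ℤ, n ≠ 0 →
      alpha n (Finsupp.single φ 1) = ∑ᶠ j : ℤ, psi j (psiStar (j + n) (Finsupp.single φ 1))) ∧
    alpha 0 (Finsupp.single φ 1) =
      (∑ᶠ (j : ℤ) (_ : 0 < j), psi j (psiStar j (Finsupp.single φ 1))) -
        ∑ᶠ (j : ℤ) (_ : j ≤ 0), psiStar j (psi j (Finsupp.single φ 1)) := by
  obtain ⟨m, N, hN⟩ := φ.ex_charge
  refine ⟨?_, ?_, ?_, ?_, ?_⟩
  · -- n ≠ 0 finiteness
    intro n hn
    apply Set.Finite.subset (Set.Finite.image (fun s : ℕ => φ.seq s - n)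
      (Set.finite_Iio (N + n.toNat + (-n).toNat)))
    intro j hj
    simp only [Set.mem_setOf_eq] at hj
    by_cases hex : ∃ s, φ.seq s = j + n
    · obtain ⟨s, hs⟩ := hex
      have hsM : s < N + n.toNat + (-n).toNat := by
        by_contra hsM
        push_neg at hsM
        apply hj
        rw [psiStar_single_of_mem hs, map_smul]
        have hseq : φ.seq s = m - s := hN s (by omega)
        rcases lt_or_gt_of_ne hn with hneg | hpos
        · -- n < 0 : position t = s - (-n).toNat < s
          have htoNat : ((-n).toNat : ℤ) = -n := Int.toNat_of_nonneg (by omega)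
          have h1 : (φ.removeSIM s).seq (s - (-n).toNat) = φ.seq (s - (-n).toNat) :=
            if_pos (by omega)
          have h2 : φ.seq (s - (-n).toNat) = m - (s - (-n).toNat : ℕ) :=
            hN _ (by omega)
          have hc : ((s - (-n).toNat : ℕ) : ℤ) = (s : ℤ) + n := by omega
          have h3 : (φ.removeSIM s).seq (s - (-n).toNat) = j := by
            rw [h1, h2, hc]; omega
          rw [psi_single_of_mem h3, smul_zero]
        · -- n > 0 : position t = s + n.toNat - 1 ≥ s
          have htoNat : (n.toNat : ℤ) = n := Int.toNat_of_nonneg (by omega)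
          have h1 : (φ.removeSIM s).seq (s + n.toNat - 1) = φ.seq (s + n.toNat - 1 + 1) :=
            if_neg (by omega)
          have h2 : φ.seq (s + n.toNat - 1 + 1) = m - (s + n.toNat - 1 + 1 : ℕ) :=
            hN _ (by omega)
          have hc : ((s + n.toNat - 1 + 1 : ℕ) : ℤ) = (s : ℤ) + n := by omega
          have h3 : (φ.removeSIM s).seq (s + n.toNat - 1) = j := by
            rw [h1, h2, hc]; omega
          rw [psi_single_of_mem h3, smul_zero]
      exact ⟨s, hsM, show φ.seq s - n = j by omega⟩
    · exfalso
      apply hj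
      push_neg at hex
      rw [psiStar_single_of_not_mem hex, map_zero]
  · -- n = 0, positive part
    apply Set.Finite.subset (Set.Finite.image φ.seq (Set.finite_Iio (N + m.toNat)))
    rintro j ⟨hj0, hj⟩
    by_cases hex : ∃ s, φ.seq s = j
    · obtain ⟨s, hs⟩ := hex
      have : s < N + m.toNat := by
        by_contra hsM
        push_neg at hsM
        have := hN s (by omega)
        omega
      exact ⟨s, this, hs⟩
    · exfalso
      apply hj
      push_neg at hex
      rw [psiStar_single_of_not_mem hex, map_zero]
  · -- n = 0, nonpositive part
    apply Set.Finite.subset (Set.finite_Ioc (m - N) 0)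
    rintro j ⟨hj0, hj⟩
    have hnm : ∀ s, φ.seq s ≠ j := by
      intro s hs
      exact hj (by rw [psi_single_of_mem hs, map_zero])
    have : m - N < j := by
      by_contra hle
      push_neg at hle
      apply hnm (m - j).toNat
      rw [hN (m - j).toNat (by omega)]
      omega
    exact ⟨this, hj0⟩
  · intro n hn
    rw [alpha, lift_single_one, if_neg hn]
  · rw [alpha, lift_single_one, if_pos rfl]
end
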